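/- For a uniform distribution on m urns, the expected number of throws until every urn has received at least one ball equals m·H_m, where H_m = 1 + 1/2 + ... + 1/m is the m-th harmonic number. -/

import Mathlib

open Finset

lemma alt_choose_shift (n : ℕ) :
    ∑ k ∈ range (n + 1), (-1 : ℝ) ^ k * ((n + 1).choose (k + 1)) = 1 := by
  have key : ∀ k ∈ range (n + 1), (-1 : ℝ) ^ k * ((n + 1).choose (k + 1))
      = (fun k => (-1 : ℝ) ^ k * (n.choose k)) k
        - (fun k => (-1 : ℝ) ^ k * (n.choose k)) (k + 1) := by
    intro k _
    simp only [Nat.choose_succ_succ, pow_succ]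
    push_cast
    ring
  rw [Finset.sum_congr rfl key, Finset.sum_range_sub']
  simp [Nat.choose_eq_zero_of_lt (by omega : n < n + 1)]

lemma harm (m : ℕ) :
    ∑ k ∈ range m, (-1 : ℝ) ^ k * (m.choose (k + 1)) / (k + 1)
      = ∑ i ∈ range m, (1 : ℝ) / (i + 1) := by
  induction m with
  | zero => simp
  | succ n ih =>
    have cast_id : ∀ k : ℕ, (n.choose k : ℝ) / (k + 1) = ((n + 1).choose (k + 1) : ℝ) / (n + 1) := by
      intro k
      have h := Nat.add_one_mul_choose_eq n k
      have h' : ((n + 1 : ℕ) : ℝ) * (n.choose k) = ((n + 1).choose (k + 1) : ℝ) * (k + 1) := by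
        exact_mod_cast congrArg (Nat.cast : ℕ → ℝ) h
      push_cast at h' ⊢
      field_simp
      linarith
    have split : ∀ k ∈ range (n + 1),
        (-1 : ℝ) ^ k * ((n + 1).choose (k + 1)) / (k + 1)
          = (-1 : ℝ) ^ k * (n.choose (k + 1)) / (k + 1)
            + (-1 : ℝ) ^ k * ((n + 1).choose (k + 1)) / (n + 1) := by
      intro k _
      have hc : (((n + 1).choose (k + 1) : ℕ) : ℝ) = (n.choose k : ℝ) + (n.choose (k + 1) : ℝ) := by
        rw [Nat.choose_succ_succ]; push_cast; ring
      rw [mul_div_assoc, mul_div_assoc, mul_div_assoc, ← cast_id k, hc]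
      ring
    rw [Finset.sum_congr rfl split, Finset.sum_add_distrib]
    have A : ∑ k ∈ range (n + 1), (-1 : ℝ) ^ k * (n.choose (k + 1)) / (k + 1)
        = ∑ i ∈ range n, (1 : ℝ) / (i + 1) := by
      rw [Finset.sum_range_succ, Nat.choose_eq_zero_of_lt (by omega)]
      simp [ih]
    have B : ∑ k ∈ range (n + 1), (-1 : ℝ) ^ k * ((n + 1).choose (k + 1)) / (n + 1)
        = 1 / (n + 1) := by
      rw [← Finset.sum_div, alt_choose_shift]
    rw [A, B, Finset.sum_range_succ]

lemma count_nonsurj (m t : ℕ) :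
    ((Finset.univ.filter (fun v : Fin t → Fin m => ¬ Function.Surjective v)).card : ℤ)
      = ∑ T ∈ ((univ : Finset (Fin m)).powerset.filter (·.Nonempty)),
          (-1 : ℤ) ^ (#T + 1) * (((m - #T) ^ t : ℕ) : ℤ) := by
  classical
  set S : Fin m → Finset (Fin t → Fin m) :=
    fun i => univ.filter (fun v => ∀ x, v x ≠ i) with hS
  have hunion : Finset.univ.filter (fun v : Fin t → Fin m => ¬ Function.Surjective v)
      = (univ : Finset (Fin m)).biUnion S := by
    ext v
    simp only [mem_filter, mem_univ, true_and, mem_biUnion, hS, Function.Surjective]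
    push_neg
    simp
  have hcard : ∀ (T : Finset (Fin m)) (hT : T.Nonempty),
      #(T.inf' hT S) = (m - #T) ^ t := by
    intro T hT
    have hEq : T.inf' hT S = Fintype.piFinset (fun _ : Fin t => Tᶜ) := by
      ext v
      simp only [Finset.mem_inf', Fintype.mem_piFinset, Finset.mem_compl, hS,
        mem_filter, mem_univ, true_and]
      constructor
      · intro h x hx; exact h _ hx x rfl
      · intro h i hi x hvx; exact h x (hvx ▸ hi)
    rw [hEq, Fintype.card_piFinset_const, Finset.card_compl]
    simp
  have hIE := Finset.inclusion_exclusion_card_biUnion (univ : Finset (Fin m)) S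
  rw [hunion, hIE]
  rw [show (∑ T : ((univ : Finset (Fin m)).powerset.filter (·.Nonempty)),
        (-1 : ℤ) ^ (#T.1 + 1) * #(T.1.inf' (mem_filter.1 T.2).2 S))
      = ∑ T : ((univ : Finset (Fin m)).powerset.filter (·.Nonempty)),
        (-1 : ℤ) ^ (#T.1 + 1) * (((m - #T.1) ^ t : ℕ) : ℤ) from
    Finset.sum_congr rfl (fun T _ => by rw [hcard T.1 (mem_filter.1 T.2).2])]
  exact Finset.sum_coe_sort ((univ : Finset (Fin m)).powerset.filter (·.Nonempty))
    (fun T => (-1 : ℤ) ^ (#T + 1) * (((m - #T) ^ t : ℕ) : ℤ))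

theorem stmt1 (m : ℕ) (hm : 0 < m) :
    ∑' t : ℕ,
      ((Finset.univ.filter (fun v : Fin t → Fin m => ¬ Function.Surjective v)).card : ℝ)
        / (m : ℝ) ^ t
      = (m : ℝ) * ∑ i ∈ Finset.range m, (1 : ℝ) / (i + 1) := by
  classical
  have hm' : (0 : ℝ) < m := by exact_mod_cast hm
  set P := ((univ : Finset (Fin m)).powerset.filter (·.Nonempty)) with hP
  set r : Finset (Fin m) → ℝ := fun T => ((m - #T : ℕ) : ℝ) / m with hr
  have hcardle : ∀ T : Finset (Fin m), #T ≤ m := by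
    intro T
    simpa using Finset.card_le_card (Finset.subset_univ T)
  have hper : ∀ t : ℕ,
      ((Finset.univ.filter (fun v : Fin t → Fin m => ¬ Function.Surjective v)).card : ℝ)
        / (m : ℝ) ^ t
      = ∑ T ∈ P, (-1 : ℝ) ^ (#T + 1) * (r T) ^ t := by
    intro t
    have h := count_nonsurj m t
    have h' : ((Finset.univ.filter
        (fun v : Fin t → Fin m => ¬ Function.Surjective v)).card : ℝ)
        = ∑ T ∈ P, (-1 : ℝ) ^ (#T + 1) * (((m - #T : ℕ) : ℝ)) ^ t := by
      exact_mod_cast congrArg (Int.cast : ℤ → ℝ) h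
    rw [h', Finset.sum_div]
    refine Finset.sum_congr rfl fun T _ => ?_
    rw [hr, div_pow, mul_div_assoc]
  rw [tsum_congr hper]
  have hr0 : ∀ T, 0 ≤ r T := fun T => by positivity
  have hr1 : ∀ T ∈ P, r T < 1 := by
    intro T hT
    have hTne : T.Nonempty := (Finset.mem_filter.1 hT).2
    have : (m - #T : ℕ) < m := by
      have := hTne.card_pos
      omega
    rw [hr, div_lt_one hm']
    exact_mod_cast this
  have hsumm : ∀ T ∈ P, Summable (fun t : ℕ => (-1 : ℝ) ^ (#T + 1) * (r T) ^ t) :=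
    fun T hT => (summable_geometric_of_lt_one (hr0 T) (hr1 T hT)).mul_left _
  rw [Summable.tsum_finsetSum hsumm]
  have hgeo : ∀ T ∈ P, ∑' t : ℕ, (-1 : ℝ) ^ (#T + 1) * (r T) ^ t
      = (-1 : ℝ) ^ (#T + 1) * ((m : ℝ) / #T) := by
    intro T hT
    rw [tsum_mul_left, tsum_geometric_of_lt_one (hr0 T) (hr1 T hT)]
    congr 1
    have hsub : ((m - #T : ℕ) : ℝ) = (m : ℝ) - #T := by
      push_cast [Nat.cast_sub (hcardle T)]; ring
    have hTpos : (0 : ℝ) < #T := by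
      exact_mod_cast (Finset.mem_filter.1 hT).2.card_pos
    rw [hr]
    rw [show (1 : ℝ) - ((m - #T : ℕ) : ℝ) / m = (#T : ℝ) / m by
      rw [hsub]; field_simp; ring]
    rw [inv_div]
  rw [Finset.sum_congr rfl hgeo]
  have hfull : ∑ T ∈ P, (-1 : ℝ) ^ (#T + 1) * ((m : ℝ) / #T)
      = ∑ T ∈ (univ : Finset (Fin m)).powerset, (-1 : ℝ) ^ (#T + 1) * ((m : ℝ) / #T) := by
    refine Finset.sum_filter_of_ne ?_
    intro T _ hne
    rcases T.eq_empty_or_nonempty with rfl | h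
    · simp at hne
    · exact h
  rw [hfull]
  rw [Finset.sum_powerset_apply_card (fun j : ℕ => (-1 : ℝ) ^ (j + 1) * ((m : ℝ) / j))]
  simp only [Finset.card_univ, Fintype.card_fin, nsmul_eq_mul]
  rw [Finset.sum_range_succ']
  have hz : (m.choose 0 : ℝ) * ((-1 : ℝ) ^ (0 + 1) * ((m : ℝ) / ((0 : ℕ) : ℝ))) = 0 := by
    simp
  rw [hz, add_zero]
  have : ∑ k ∈ Finset.range m, (m.choose (k + 1) : ℝ) * ((-1 : ℝ) ^ (k + 1 + 1) * ((m : ℝ) / ((k + 1 : ℕ) : ℝ)))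
      = (m : ℝ) * ∑ k ∈ Finset.range m, (-1 : ℝ) ^ k * (m.choose (k + 1)) / (k + 1) := by
    rw [Finset.mul_sum]
    refine Finset.sum_congr rfl fun k _ => ?_
    push_cast
    ring
  rw [this, harm m]
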